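/- Let ĥ(n, x) = Wr[H_1, H_2, H_n](x) (so ĥ(n,·) = 0 when n < 0 or n ∈ {1, 2}). Then for every integer n ∈ I = {0} ∪ {n : n ≥ 3} and every x ∈ ℝ: 4x(3 + 2x²) ĥ(n, x) = ((n−2)(n−1)/((n+1)(n+2))) ĥ(n+3, x) + 6(n−2) ĥ(n+1, x) + 12(n−1)n ĥ(n−1, x) + 8(n−2)(n−1)n ĥ(n−3, x). (This is the Miki–Tsujimoto–Durán recurrence relation for the exceptional Hermite family with λ = (1,1), K = {1,2}.) -/

import Mathlib

noncomputable section

/-- Physicists' Hermite polynomials indexed by naturals. -/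
def hermN : ℕ → Polynomial ℝ
  | 0 => 1
  | 1 => Polynomial.C 2 * Polynomial.X
  | (n + 2) => Polynomial.C 2 * Polynomial.X * hermN (n + 1)
      - Polynomial.C (2 * ((n : ℝ) + 1)) * hermN n

/-- Physicists' Hermite polynomials indexed by integers, `0` for negative index. -/
def Herm (n : ℤ) : Polynomial ℝ := if 0 ≤ n then hermN n.toNat else 0

/-- Hermite polynomial as a real function. -/
def H (n : ℤ) : ℝ → ℝ := fun x => (Herm n).eval x

/-- The Wronskian determinant of a finite family of functions. -/
def Wr {m : ℕ} (f : Fin m → ℝ → ℝ) (x : ℝ) : ℝ :=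
  Matrix.det (Matrix.of fun i j : Fin m => iteratedDeriv (j : ℕ) (f i) x)

/-- The exceptional Hermite polynomial `ĥ(n,x) = Wr[H_1, H_2, H_n](x)`
for the partition `λ = (1,1)`, `K = {1,2}`. -/
def hh2 (n : ℤ) : ℝ → ℝ := fun x => Wr ![H 1, H 2, H n] x

open Polynomial in
lemma hermN_succ (n : ℕ) : hermN (n+2) = Polynomial.C 2 * Polynomial.X * hermN (n + 1)
      - Polynomial.C (2 * ((n : ℝ) + 1)) * hermN n := by rw [hermN]

open Polynomial in
lemma hermN_deriv : ∀ n : ℕ, derivative (hermN (n+1)) = C (2*((n:ℝ)+1)) * hermN n := by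
  intro n
  induction n using Nat.twoStepInduction with
  | zero => show derivative (hermN 1) = _; simp [hermN]
  | one => show derivative (hermN 2) = _; simp [hermN]; ring
  | more n ih1 ih2 =>
      show derivative (hermN (n+3)) = _
      rw [show n + 3 = (n+1)+2 from rfl, hermN_succ (n+1)]
      simp only [derivative_sub, derivative_mul, derivative_C, derivative_X]
      rw [show n+1+1 = n+2 from rfl, ih2, ih1, hermN_succ n]
      push_cast
      simp only [C_add, C_mul, map_ofNat, C_1]
      ring

lemma Herm_neg {n : ℤ} (h : n < 0) : Herm n = 0 := by simp [Herm, not_le.mpr h]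

lemma Herm_ofNat (k : ℕ) : Herm (k : ℤ) = hermN k := by simp [Herm]

open Polynomial in
lemma Herm_deriv (n : ℤ) : derivative (Herm n) = C (2*(n:ℝ)) * Herm (n-1) := by
  rcases lt_trichotomy n 0 with h | h | h
  · rw [Herm_neg h, Herm_neg (by omega)]; simp
  · subst h; rw [show ((0:ℤ)) = ((0:ℕ):ℤ) from rfl, Herm_ofNat, Herm_neg (by omega)]
    simp [hermN]
  · obtain ⟨k, rfl⟩ : ∃ k : ℕ, n = (k:ℤ)+1 := ⟨(n-1).toNat, by omega⟩
    rw [show (k:ℤ)+1 = ((k+1:ℕ):ℤ) by push_cast; ring, Herm_ofNat,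
        show ((k+1:ℕ):ℤ)-1 = ((k:ℕ):ℤ) by push_cast; ring, Herm_ofNat, hermN_deriv]
    push_cast; ring_nf

lemma H_differentiable (n : ℤ) : Differentiable ℝ (H n) := by
  unfold H
  simpa using (Herm n).differentiable

lemma H_deriv (n : ℤ) : deriv (H n) = fun x => 2*(n:ℝ) * H (n-1) x := by
  funext x
  unfold H
  rw [Polynomial.deriv, Herm_deriv]
  simp

lemma H_deriv' (n : ℤ) (x : ℝ) : deriv (H n) x = 2*(n:ℝ) * H (n-1) x := by rw [H_deriv]

lemma H_iter1 (n : ℤ) (x : ℝ) : iteratedDeriv 1 (H n) x = 2*(n:ℝ) * H (n-1) x := by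
  rw [iteratedDeriv_one, H_deriv']

lemma H_iter2 (n : ℤ) (x : ℝ) :
    iteratedDeriv 2 (H n) x = 4*(n:ℝ)*((n:ℝ)-1) * H (n-2) x := by
  rw [iteratedDeriv_succ', iteratedDeriv_one]
  rw [H_deriv]
  rw [deriv_const_mul _ ((H_differentiable (n-1)) x), H_deriv']
  push_cast
  rw [show n-1-1 = n-2 by ring]
  ring

lemma Hval (k : ℕ) (x : ℝ) : H (k : ℤ) x = (hermN k).eval x := by
  unfold H; rw [Herm_ofNat]

lemma Hneg {n : ℤ} (h : n < 0) (x : ℝ) : H n x = 0 := by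
  unfold H; rw [Herm_neg h]; simp

lemma H_rec (k : ℤ) (hk : 0 ≤ k) (x : ℝ) :
    H (k+2) x = 2*x*H (k+1) x - 2*((k:ℝ)+1)*H k x := by
  lift k to ℕ using hk
  rw [show (k:ℤ)+2 = ((k+2:ℕ):ℤ) by push_cast; ring,
      show (k:ℤ)+1 = ((k+1:ℕ):ℤ) by push_cast; ring, Hval, Hval, Hval, hermN_succ]
  simp

lemma H0 (x : ℝ) : H 0 x = 1 := by
  rw [show (0:ℤ) = ((0:ℕ):ℤ) from rfl, Hval]; simp [hermN]
lemma H1 (x : ℝ) : H 1 x = 2*x := by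
  rw [show (1:ℤ) = ((1:ℕ):ℤ) from rfl, Hval]; simp [hermN]
lemma H2 (x : ℝ) : H 2 x = 4*x^2-2 := by
  have := H_rec 0 le_rfl x
  norm_num [H0, H1] at this
  rw [this]; ring
lemma H3 (x : ℝ) : H 3 x = 8*x^3-12*x := by
  have := H_rec 1 (by norm_num) x
  norm_num [H1, H2] at this
  rw [this]; ring
lemma H4 (x : ℝ) : H 4 x = 16*x^4-48*x^2+12 := by
  have := H_rec 2 (by norm_num) x
  norm_num [H2, H3] at this
  rw [this]; ring
lemma H5 (x : ℝ) : H 5 x = 32*x^5-160*x^3+120*x := by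
  have := H_rec 3 (by norm_num) x
  norm_num [H3, H4] at this
  rw [this]; ring
lemma H6 (x : ℝ) : H 6 x = 64*x^6-480*x^4+720*x^2-120 := by
  have := H_rec 4 (by norm_num) x
  norm_num [H4, H5] at this
  rw [this]; ring
lemma H7 (x : ℝ) : H 7 x = 128*x^7-1344*x^5+3360*x^3-1680*x := by
  have := H_rec 5 (by norm_num) x
  norm_num [H5, H6] at this
  rw [this]; ring

lemma hh2_eq (n : ℤ) (x : ℝ) :
    hh2 n x = 16*(n:ℝ)*((n:ℝ)-1)*(2*x^2+1)*H (n-2) x - 32*(n:ℝ)*x*H (n-1) x + 16*H n x := by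
  unfold hh2 Wr
  rw [Matrix.det_fin_three]
  simp only [Matrix.of_apply, Matrix.cons_val', Matrix.cons_val_zero, Matrix.cons_val_one,
    Matrix.head_cons, Matrix.cons_val_two, Matrix.tail_cons, Matrix.empty_val',
    Matrix.cons_val_fin_one, Matrix.head_fin_const]
  simp only [Fin.isValue, Fin.val_zero, Fin.val_one, Fin.val_two]
  simp only [iteratedDeriv_zero, H_iter1, H_iter2]
  norm_num
  rw [H0, H1, H2]
  ring

set_option maxHeartbeats 1600000 in
/-- The Miki–Tsujimoto–Durán recurrence relation for `λ = (1,1)`. -/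
theorem stmt_18 (n : ℤ) (hn : n = 0 ∨ 3 ≤ n) (x : ℝ) :
    4 * x * (3 + 2 * x ^ 2) * hh2 n x =
      (((n : ℝ) - 2) * ((n : ℝ) - 1) / (((n : ℝ) + 1) * ((n : ℝ) + 2))) * hh2 (n + 3) x
      + 6 * ((n : ℝ) - 2) * hh2 (n + 1) x
      + 12 * ((n : ℝ) - 1) * (n : ℝ) * hh2 (n - 1) x
      + 8 * ((n : ℝ) - 2) * ((n : ℝ) - 1) * (n : ℝ) * hh2 (n - 3) x := by
  rcases hn with rfl | h3
  · rw [hh2_eq, hh2_eq, hh2_eq, hh2_eq, hh2_eq]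
    norm_num
    rw [H0, H1, H2, H3]
    ring
  rcases eq_or_lt_of_le h3 with rfl | h4
  · rw [hh2_eq, hh2_eq, hh2_eq, hh2_eq, hh2_eq]
    norm_num
    rw [H0, H1, H2, H3, H4, H5, H6]
    ring
  rcases eq_or_lt_of_le (by omega : (4:ℤ) ≤ n) with rfl | h5
  · rw [hh2_eq, hh2_eq, hh2_eq, hh2_eq, hh2_eq]
    norm_num
    rw [H0, H1, H2, H3, H4, H5, H6, H7]
    ring
  · have h5' : (5:ℤ) ≤ n := by omega
    obtain ⟨m, rfl⟩ := Int.le.dest h5'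
    have hd1 : ((5:ℝ)+(m:ℝ)+1) ≠ 0 := by positivity
    have hd2 : ((5:ℝ)+(m:ℝ)+2) ≠ 0 := by positivity
    push_cast
    field_simp
    simp only [hh2_eq]
    simp only [show (5:ℤ)+(m:ℤ) = (m:ℤ)+5 by ring,
      show (m:ℤ)+5+3-2 = (m:ℤ)+6 by ring,
      show (m:ℤ)+5+3-1 = (m:ℤ)+7 by ring,
      show (m:ℤ)+5+3 = (m:ℤ)+8 by ring,
      show (m:ℤ)+5+1-2 = (m:ℤ)+4 by ring,
      show (m:ℤ)+5+1-1 = (m:ℤ)+5 by ring,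
      show (m:ℤ)+5+1 = (m:ℤ)+6 by ring,
      show (m:ℤ)+5-1-2 = (m:ℤ)+2 by ring,
      show (m:ℤ)+5-1-1 = (m:ℤ)+3 by ring,
      show (m:ℤ)+5-1 = (m:ℤ)+4 by ring,
      show (m:ℤ)+5-3-2 = (m:ℤ) by ring,
      show (m:ℤ)+5-3-1 = (m:ℤ)+1 by ring,
      show (m:ℤ)+5-3 = (m:ℤ)+2 by ring,
      show (m:ℤ)+5-2 = (m:ℤ)+3 by ring,
      show (m:ℤ)+2-1 = (m:ℤ)+1 by ring,
      show (m:ℤ)+2-2 = (m:ℤ) by ring,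
      show (m:ℤ)+4-1 = (m:ℤ)+3 by ring,
      show (m:ℤ)+4-2 = (m:ℤ)+2 by ring,
      show (m:ℤ)+6-1 = (m:ℤ)+5 by ring,
      show (m:ℤ)+6-2 = (m:ℤ)+4 by ring,
      show (m:ℤ)+8-1 = (m:ℤ)+7 by ring,
      show (m:ℤ)+8-2 = (m:ℤ)+6 by ring]
    have e8 : H ((m:ℤ)+8) x = 2*x*H ((m:ℤ)+7) x - 2*((m:ℝ)+7)*H ((m:ℤ)+6) x := by
      have h := H_rec ((m:ℤ)+6) (by positivity) x
      rw [show (m:ℤ)+6+2 = (m:ℤ)+8 by ring, show (m:ℤ)+6+1 = (m:ℤ)+7 by ring] at h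
      rw [h]; push_cast; ring
    have e7 : H ((m:ℤ)+7) x = 2*x*H ((m:ℤ)+6) x - 2*((m:ℝ)+6)*H ((m:ℤ)+5) x := by
      have h := H_rec ((m:ℤ)+5) (by positivity) x
      rw [show (m:ℤ)+5+2 = (m:ℤ)+7 by ring, show (m:ℤ)+5+1 = (m:ℤ)+6 by ring] at h
      rw [h]; push_cast; ring
    have e6 : H ((m:ℤ)+6) x = 2*x*H ((m:ℤ)+5) x - 2*((m:ℝ)+5)*H ((m:ℤ)+4) x := by
      have h := H_rec ((m:ℤ)+4) (by positivity) x
      rw [show (m:ℤ)+4+2 = (m:ℤ)+6 by ring, show (m:ℤ)+4+1 = (m:ℤ)+5 by ring] at h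
      rw [h]; push_cast; ring
    have e5 : H ((m:ℤ)+5) x = 2*x*H ((m:ℤ)+4) x - 2*((m:ℝ)+4)*H ((m:ℤ)+3) x := by
      have h := H_rec ((m:ℤ)+3) (by positivity) x
      rw [show (m:ℤ)+3+2 = (m:ℤ)+5 by ring, show (m:ℤ)+3+1 = (m:ℤ)+4 by ring] at h
      rw [h]; push_cast; ring
    have e4 : H ((m:ℤ)+4) x = 2*x*H ((m:ℤ)+3) x - 2*((m:ℝ)+3)*H ((m:ℤ)+2) x := by
      have h := H_rec ((m:ℤ)+2) (by positivity) x
      rw [show (m:ℤ)+2+2 = (m:ℤ)+4 by ring, show (m:ℤ)+2+1 = (m:ℤ)+3 by ring] at h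
      rw [h]; push_cast; ring
    have e3 : H ((m:ℤ)+3) x = 2*x*H ((m:ℤ)+2) x - 2*((m:ℝ)+2)*H ((m:ℤ)+1) x := by
      have h := H_rec ((m:ℤ)+1) (by positivity) x
      rw [show (m:ℤ)+1+2 = (m:ℤ)+3 by ring, show (m:ℤ)+1+1 = (m:ℤ)+2 by ring] at h
      rw [h]; push_cast; ring
    have e2 : H ((m:ℤ)+2) x = 2*x*H ((m:ℤ)+1) x - 2*((m:ℝ)+1)*H ((m:ℤ)+0) x := by
      have h := H_rec ((m:ℤ)+0) (by positivity) x
      rw [show (m:ℤ)+0+2 = (m:ℤ)+2 by ring, show (m:ℤ)+0+1 = (m:ℤ)+1 by ring] at h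
      rw [h]; push_cast; ring
    rw [e8, e7, e6, e5, e4, e3, e2]
    push_cast
    ring

end
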